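/- (Russo lower bound for increasing events.) Let T > 0, 0 ≤ h₀ < h, N ≥ 1, and let μ_t^N = μ^N_{T, h₀ + t(h−h₀)} be the torus Gibbs family on 𝕋_N; assume each μ_t^N satisfies the FKG inequality. Then for every increasing event A ⊆ {−1,+1}^{𝕋_N} and every t ∈ [0,1]: d/dt μ_t^N(A) ≥ ((h−h₀)/(𝔎T)) · (1 − E_{μ_t^N}[ω(𝐎)]) · Σ_{v ∈ 𝕋_N} μ_t^N(A ∩ Δ_v A). Moreover 1 − E_{μ_t^N}[ω(𝐎)] ≥ 2(1 + e^{(8+2h(t))/(𝔎T)})^{−1}, so the prefactor 1 − E_{μ_t^N}[ω(𝐎)] is bounded below by a positive constant depending only on T and an upper bound for h. -/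

import Mathlib

open MeasureTheory

noncomputable section

/-- Sites of the square lattice `ℤ²`. -/
abbrev Site : Type := ℤ × ℤ

/-- Spin configurations: `true` codes spin `+1`, `false` codes spin `−1`. -/
abbrev Config : Type := Site → Bool

/-- ℓ¹-distance on `ℤ²`. -/
def d1 (x y : Site) : ℤ := |x.1 - y.1| + |x.2 - y.2|

/-- ℓ∞-distance on `ℤ²`. -/
def dInf (x y : Site) : ℤ := max |x.1 - y.1| |x.2 - y.2|

/-- ℓ∞-norm on `ℤ²`. -/
def normInf (x : Site) : ℤ := max |x.1| |x.2|

/-- Adjacency (ℓ¹-distance one). -/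
def adj (x y : Site) : Prop := d1 x y = 1

/-- (*)-adjacency (ℓ∞-distance one). -/
def adjStar (x y : Site) : Prop := dInf x y = 1

/-- Generic connection: there is a nonempty `r`-path, all of whose vertices lie in `V`
and satisfy the spin condition `ok`, starting in `A` and ending in `B`. -/
def Conn (r : Site → Site → Prop) (ok : Site → Prop) (V A B : Set Site) : Prop :=
  ∃ γ : List Site, γ ≠ [] ∧ γ.Chain' r ∧ (∀ v ∈ γ, v ∈ V ∧ ok v) ∧
    (∃ a ∈ A, γ.head? = some a) ∧ (∃ b ∈ B, γ.getLast? = some b)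

/-- `A` is joined to `B` by a (+)-path inside `V`. -/
def PlusConn (ω : Config) (V A B : Set Site) : Prop :=
  Conn adj (fun v => ω v = true) V A B

/-- `A` is joined to `B` by a (−*)-path inside `V`. -/
def MinusConn (ω : Config) (V A B : Set Site) : Prop :=
  Conn adjStar (fun v => ω v = false) V A B

/-- The rectangle `[a,b] × [c,d]` of `ℤ²`. -/
def rect (a b c d : ℤ) : Set Site := {x : Site | a ≤ x.1 ∧ x.1 ≤ b ∧ c ≤ x.2 ∧ x.2 ≤ d}

/-- The box `S(n) = [−n,n]²`. -/
def Sbox (n : ℤ) : Set Site := rect (-n) n (-n) n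

/-- The box `S(y,n) = y + [−n,n]²`. -/
def SboxAt (y : Site) (n : ℤ) : Set Site := {x : Site | dInf x y ≤ n}

/-- Inner boundary `∂_in S(n) = {x : |x|_∞ = n}`. -/
def inBdry (n : ℤ) : Set Site := {x : Site | normInf x = n}

/-- Inner boundary of the shifted box `S(y,R)`. -/
def inBdryAt (y : Site) (R : ℤ) : Set Site := {x : Site | dInf x y = R}

def leftSide (n m : ℤ) : Set Site := {x : Site | x.1 = -n ∧ |x.2| ≤ m}

def rightSide (n m : ℤ) : Set Site := {x : Site | x.1 = n ∧ |x.2| ≤ m}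

/-- `A⁺(n,m)`: a horizontal (+)-crossing of `[−n,n] × [−m,m]`. -/
def Aplus (n m : ℤ) : Set Config :=
  {ω : Config | PlusConn ω (rect (-n) n (-m) m) (leftSide n m) (rightSide n m)}

/-- `A^{−*}(n,m)`: a horizontal (−*)-crossing of `[−n,n] × [−m,m]`. -/
def AminusStar (n m : ℤ) : Set Config :=
  {ω : Config | MinusConn ω (rect (-n) n (-m) m) (leftSide n m) (rightSide n m)}

def AplusN (n : ℕ) : Set Config := Aplus (n : ℤ) (n : ℤ)

/-- Probability of an event, as a real number. -/
def Pr {Ω : Type*} [MeasurableSpace Ω] (μ : Measure Ω) (A : Set Ω) : ℝ :=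
  (μ A).toReal

def configLE (ω ω' : Config) : Prop := ∀ v, ω v = true → ω' v = true

/-- Increasing events. -/
def IncreasingEvent (A : Set Config) : Prop :=
  ∀ ω ω' : Config, configLE ω ω' → ω ∈ A → ω' ∈ A

/-- The FKG inequality. -/
def FKG (μ : Measure Config) : Prop :=
  ∀ A B : Set Config, IncreasingEvent A → IncreasingEvent B →
    Pr μ A * Pr μ B ≤ Pr μ (A ∩ B)

/-- `A` depends only on the spins in `V`. -/
def ConfigDependsOn (A : Set Config) (V : Set Site) : Prop :=
  ∀ ω ω' : Config, (∀ v ∈ V, ω v = ω' v) → (ω ∈ A ↔ ω' ∈ A)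

/-- ℓ¹-distance between two finite sets of sites. -/
def finsetDist (V₁ V₂ : Finset Site) : ℝ :=
  sInf {r : ℝ | ∃ x ∈ V₁, ∃ y ∈ V₂, r = (d1 x y : ℝ)}

/-- Exponential mixing with constants `C, α`. -/
def ExpMixing (μ : Measure Config) (C α : ℝ) : Prop :=
  ∀ V₁ V₂ : Finset Site, Disjoint V₁ V₂ →
    ∀ A B : Set Config, ConfigDependsOn A (V₁ : Set Site) → ConfigDependsOn B (V₂ : Set Site) →
      |Pr μ (A ∩ B) - Pr μ A * Pr μ B| ≤
        C * (V₁.card : ℝ) * finsetDist V₁ V₂ *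
          Real.exp (-(α * finsetDist V₁ V₂)) * Pr μ B

def shiftConfig (f : Site → Site) (ω : Config) : Config := fun x => ω (f x)

/-- Invariance under translations, the 90°-rotation and the diagonal reflection. -/
def LatticeSymmetric (μ : Measure Config) : Prop :=
  (∀ z : Site, ∀ A : Set Config, μ (shiftConfig (fun x => x + z) ⁻¹' A) = μ A) ∧
  (∀ A : Set Config, μ (shiftConfig (fun x => (-x.2, x.1)) ⁻¹' A) = μ A) ∧
  (∀ A : Set Config, μ (shiftConfig (fun x => (x.2, x.1)) ⁻¹' A) = μ A)

/-- Finite energy with constant `c`: conditionally on everything else, each spin is `+`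
(resp. `−`) with probability at least `c`. -/
def FiniteEnergy (μ : Measure Config) (c : ℝ) : Prop :=
  ∀ v : Site, ∀ A : Set Config, ConfigDependsOn A ({v}ᶜ) →
    c * Pr μ A ≤ Pr μ (A ∩ {ω : Config | ω v = true}) ∧
      c * Pr μ A ≤ Pr μ (A ∩ {ω : Config | ω v = false})

/-- Exterior boundary of a finite set of sites. -/
def extBoundary (V : Finset Site) : Set Site :=
  {x : Site | x ∉ V ∧ ∃ y ∈ V, adj x y}

/-- Monotone Markov property: for every finite `V` there is a version of the conditional
distribution of the spins in `V` given the outside, which depends only on the exterior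
boundary spins and is stochastically increasing in them. -/
def MarkovMonotone (μ : Measure Config) : Prop :=
  ∀ V : Finset Site, ∃ q : Config → Measure Config,
    (∀ η, IsProbabilityMeasure (q η)) ∧
    (∀ η η' : Config, (∀ x ∈ extBoundary V, η x = η' x) → q η = q η') ∧
    (∀ η : Config, q η {ω : Config | ∀ x, x ∉ V → ω x = η x} = 1) ∧
    (∀ A : Set Config, MeasurableSet A → μ A = ∫⁻ η, q η A ∂μ) ∧
    (∀ η η' : Config, configLE η η' → ∀ A : Set Config, IncreasingEvent A →
      q η A ≤ q η' A)

/-- δ-crossing bounds on `[n₂, L)`. -/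
def CrossingBounds (μ : Measure Config) (δ : ℕ → ℝ) (n₂ L : ℕ) : Prop :=
  ∀ k n : ℕ, 1 ≤ k → n₂ ≤ n → n < L →
    δ k ≤ Pr μ (Aplus ((k : ℤ) * (n : ℤ)) (n : ℤ)) ∧
      δ k ≤ Pr μ (AminusStar ((k : ℤ) * (n : ℤ)) (n : ℤ))

/-- `{𝒜 ↔⁺ ℬ}`. -/
def connPlus (A B : Set Site) : Set Config := {ω : Config | PlusConn ω Set.univ A B}

/-- `{𝒜 ↔^{−*} ℬ}`. -/
def connMinusStar (A B : Set Site) : Set Config := {ω : Config | MinusConn ω Set.univ A B}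

def origin : Site := ((0 : ℤ), (0 : ℤ))

/-- One-arm event `{𝐎 ↔⁺ ∂_in S(n)}`. -/
def piArm (n : ℤ) : Set Config := connPlus {origin} (inBdry n)

def piArmStar (n : ℤ) : Set Config := connMinusStar {origin} (inBdry n)

/-- One-arm event with the path contained in `S(n)`. -/
def oneArmIn (n : ℤ) : Set Config := {ω : Config | PlusConn ω (Sbox n) {origin} (inBdry n)}

/-- `𝓑(1,0,R,n)`: a (+)-path contained in `S(n)` joining `∂_in S(R)` to `∂_in S(n)`. -/
def oneArmAnn (R n : ℤ) : Set Config :=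
  {ω : Config | PlusConn ω (Sbox n) (inBdry R) (inBdry n)}

/-- A circuit with respect to the adjacency relation `r`. -/
def IsCircuit (r : Site → Site → Prop) (γ : List Site) : Prop :=
  γ ≠ [] ∧ γ.Chain' r ∧ ∃ a b, γ.head? = some a ∧ γ.getLast? = some b ∧ r b a

def listMaxNorm (γ : List Site) : ℤ := (γ.map normInf).foldr max 0

/-- `γ` surrounds `B`: every `r`-path from `B` to a point beyond the extent of `γ`
meets `γ`. -/
def SurroundsBlocking (r : Site → Site → Prop) (γ : List Site) (B : Set Site) : Prop :=
  ∀ x ∈ B, ∀ ξ : List Site, ξ.Chain' r → ξ.head? = some x →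
    (∃ y, ξ.getLast? = some y ∧ listMaxNorm γ < normInf y) → ∃ v ∈ γ, v ∈ ξ

/-- There is a (+)-circuit inside `W` surrounding `B`. -/
def plusCircuitIn (ω : Config) (B W : Set Site) : Prop :=
  ∃ γ : List Site, IsCircuit adj γ ∧ (∀ v ∈ γ, v ∈ W ∧ ω v = true) ∧
    SurroundsBlocking adjStar γ B

/-- There is a (−*)-circuit inside `W` surrounding `B`. -/
def minusStarCircuitIn (ω : Config) (B W : Set Site) : Prop :=
  ∃ γ : List Site, IsCircuit adjStar γ ∧ (∀ v ∈ γ, v ∈ W ∧ ω v = false) ∧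
    SurroundsBlocking adj γ B

/-- The (+)-cluster of the origin. -/
def plusCluster (ω : Config) : Set Site := {v : Site | PlusConn ω Set.univ {origin} {v}}

/-- The event `n ≤ R < m` for the radius `R` of the cluster of the origin. -/
def radiusBetween (n m : ℤ) : Set Config :=
  {ω : Config | (∃ v ∈ plusCluster ω, n ≤ normInf v) ∧ ∀ v ∈ plusCluster ω, normInf v < m}

/-- The radius of the cluster of the origin. -/
def clusterRadius (ω : Config) : ℕ :=
  sSup {m : ℕ | ∃ v ∈ plusCluster ω, normInf v = (m : ℤ)}

def flipC (v : Site) (ω : Config) : Config := Function.update ω v (!ω v)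

/-- `Δ_v A`: the site `v` is pivotal for `A`. -/
def pivotal (v : Site) (A : Set Config) : Set Config :=
  {ω : Config | Xor' (ω ∈ A) (flipC v ω ∈ A)}

def boxFinset (n : ℕ) : Finset Site :=
  Finset.Icc (-(n : ℤ)) (n : ℤ) ×ˢ Finset.Icc (-(n : ℤ)) (n : ℤ)

/-- `Γ` separates `P` from `Q` inside `V` (with respect to `r`-paths). -/
def SeparatesIn (r : Site → Site → Prop) (V Γ P Q : Set Site) : Prop :=
  ¬ ∃ ξ : List Site, ξ ≠ [] ∧ ξ.Chain' r ∧ (∀ x ∈ ξ, x ∈ V ∧ x ∉ Γ) ∧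
    (∃ a ∈ P, ξ.head? = some a) ∧ (∃ b ∈ Q, ξ.getLast? = some b)

def IsPlusPathIn (ω : Config) (V : Set Site) (γ : List Site) : Prop :=
  γ ≠ [] ∧ γ.Chain' adj ∧ ∀ x ∈ γ, x ∈ V ∧ ω x = true

def IsMinusStarPathIn (ω : Config) (V : Set Site) (γ : List Site) : Prop :=
  γ ≠ [] ∧ γ.Chain' adjStar ∧ ∀ x ∈ γ, x ∈ V ∧ ω x = false

/-- `V(n) = [−n,n] × [−kn,kn]`. -/
def Vbox (n kn : ℤ) : Set Site := rect (-n) n (-kn) kn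

/-- A horizontal (*)-crossing of `V(n)`. -/
def IsHorizStarCrossing (n kn : ℤ) (γ : List Site) : Prop :=
  γ ≠ [] ∧ γ.Chain' adjStar ∧ (∀ x ∈ γ, x ∈ Vbox n kn) ∧
    (∃ a, γ.head? = some a ∧ a.1 = -n) ∧ (∃ b, γ.getLast? = some b ∧ b.1 = n)

/-- `U_n(γ)`: the part of `V(n)` above the crossing `γ`. -/
def aboveRegion (n kn : ℤ) (γ : List Site) : Set Site :=
  {x : Site | x ∈ Vbox n kn ∧ x ∉ γ ∧
    ∃ ξ : List Site, ξ.Chain' adj ∧ ξ.head? = some x ∧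
      (∀ y ∈ ξ, y ∈ Vbox n kn ∧ y ∉ γ) ∧ ∃ b, ξ.getLast? = some b ∧ b.2 = kn}

/-- `L_n(γ)`: the part of `V(n)` below the crossing `γ`. -/
def belowRegion (n kn : ℤ) (γ : List Site) : Set Site :=
  {x : Site | x ∈ Vbox n kn ∧ x ∉ γ ∧
    ∃ ξ : List Site, ξ.Chain' adj ∧ ξ.head? = some x ∧
      (∀ y ∈ ξ, y ∈ Vbox n kn ∧ y ∉ γ) ∧ ∃ b, ξ.getLast? = some b ∧ b.2 = -kn}

/-- `ΔU(γ,1)`: points of `U` at ℓ¹-distance one from `γ`. -/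
def fringe (U : Set Site) (γ : List Site) : Set Site :=
  {x : Site | x ∈ U ∧ ∃ y ∈ γ, d1 x y = 1}

def bdryMinusTop (n : ℤ) : Set Site := {x : Site | normInf x = n ∧ x.2 ≠ n}

/-- The two-arm half-plane event `E₂(n)`. -/
def E2 (n : ℤ) : Set Config :=
  {ω : Config | MinusConn ω (Sbox n) {((0 : ℤ), n)} (bdryMinusTop n) ∧
    PlusConn ω (Sbox n) {((-1 : ℤ), n)} (bdryMinusTop n)}

def E2star (n : ℤ) : Set Config :=
  {ω : Config | PlusConn ω (Sbox n) {((0 : ℤ), n)} (bdryMinusTop n) ∧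
    MinusConn ω (Sbox n) {((-1 : ℤ), n)} (bdryMinusTop n)}

/-- The two-arm half-plane box event `𝓑⁺(1,1,R,n)`. -/
def B2 (R n : ℤ) : Set Config :=
  {ω : Config |
    PlusConn ω (Sbox n \ SboxAt ((0 : ℤ), n - R) (R - 1))
      (inBdryAt ((0 : ℤ), n - R) R) (bdryMinusTop n) ∧
    MinusConn ω (Sbox n \ SboxAt ((0 : ℤ), n - R) (R - 1))
      (inBdryAt ((0 : ℤ), n - R) R) (bdryMinusTop n)}

/-- The three-arm half-plane event `E₃(n)`. -/
def E3 (n : ℤ) : Set Config :=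
  {ω : Config | ω ((0 : ℤ), n) = true ∧
    (∃ r₁ r₃ : List Site, IsPlusPathIn ω (Sbox n) r₁ ∧ IsPlusPathIn ω (Sbox n) r₃ ∧
      r₁.head? = some ((-1 : ℤ), n) ∧ r₃.head? = some ((1 : ℤ), n) ∧
      (∃ b ∈ inBdry n, r₁.getLast? = some b) ∧ (∃ b ∈ inBdry n, r₃.getLast? = some b) ∧
      ∀ x ∈ r₁, x ∉ r₃) ∧
    MinusConn ω (Sbox n) {((0 : ℤ), n - 1)} (inBdry n)}

def E3star (n : ℤ) : Set Config :=
  {ω : Config | ω ((0 : ℤ), n) = false ∧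
    (∃ r₁ r₃ : List Site, IsMinusStarPathIn ω (Sbox n) r₁ ∧
      IsMinusStarPathIn ω (Sbox n) r₃ ∧
      r₁.head? = some ((-1 : ℤ), n) ∧ r₃.head? = some ((1 : ℤ), n) ∧
      (∃ b ∈ inBdry n, r₁.getLast? = some b) ∧ (∃ b ∈ inBdry n, r₃.getLast? = some b) ∧
      ∀ x ∈ r₁, x ∉ r₃) ∧
    PlusConn ω (Sbox n) {((0 : ℤ), n - 1)} (inBdry n)}

/-- The half-plane annulus `(S(n) ∖ S(R)) ∩ {x² ≤ 0}` (keeping `∂_in S(R)`). -/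
def halfAnn (R n : ℤ) : Set Site := (Sbox n \ Sbox (R - 1)) ∩ {x : Site | x.2 ≤ 0}

/-- The three-arm half-plane box event `𝓑̃⁺(2,1,R,n)`. -/
def B3 (R n : ℤ) : Set Config :=
  {ω : Config | ∃ r₁ r₂ s : List Site,
    IsPlusPathIn ω (halfAnn R n) r₁ ∧ IsPlusPathIn ω (halfAnn R n) r₂ ∧
    IsMinusStarPathIn ω (halfAnn R n) s ∧
    (∃ a ∈ inBdry R, r₁.head? = some a) ∧ (∃ b ∈ inBdry n, r₁.getLast? = some b) ∧
    (∃ a ∈ inBdry R, r₂.head? = some a) ∧ (∃ b ∈ inBdry n, r₂.getLast? = some b) ∧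
    (∃ a ∈ inBdry R, s.head? = some a) ∧ (∃ b ∈ inBdry n, s.getLast? = some b) ∧
    (∀ x ∈ r₁, x ∉ r₂) ∧
    SeparatesIn adj (halfAnn R n) {x : Site | x ∈ s} {x : Site | x ∈ r₁} {x : Site | x ∈ r₂}}

def B3star (R n : ℤ) : Set Config :=
  {ω : Config | ∃ r₁ r₂ s : List Site,
    IsMinusStarPathIn ω (halfAnn R n) r₁ ∧ IsMinusStarPathIn ω (halfAnn R n) r₂ ∧
    IsPlusPathIn ω (halfAnn R n) s ∧
    (∃ a ∈ inBdry R, r₁.head? = some a) ∧ (∃ b ∈ inBdry n, r₁.getLast? = some b) ∧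
    (∃ a ∈ inBdry R, r₂.head? = some a) ∧ (∃ b ∈ inBdry n, r₂.getLast? = some b) ∧
    (∃ a ∈ inBdry R, s.head? = some a) ∧ (∃ b ∈ inBdry n, s.getLast? = some b) ∧
    (∀ x ∈ r₁, x ∉ r₂) ∧
    SeparatesIn adjStar (halfAnn R n) {x : Site | x ∈ s} {x : Site | x ∈ r₁} {x : Site | x ∈ r₂}}

/-- The four-arm event `Γ(v, S(m))`. -/
def gammaEvent (v : Site) (m : ℤ) : Set Config :=
  {ω : Config | ∃ r₁ r₃ r₂ r₄ : List Site,
    (r₁.Chain' adj ∧ r₁.head? = some v ∧ (∃ b ∈ inBdry m, r₁.getLast? = some b) ∧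
      ∀ x ∈ r₁, x ∈ Sbox m ∧ (x = v ∨ ω x = true)) ∧
    (r₃.Chain' adj ∧ r₃.head? = some v ∧ (∃ b ∈ inBdry m, r₃.getLast? = some b) ∧
      ∀ x ∈ r₃, x ∈ Sbox m ∧ (x = v ∨ ω x = true)) ∧
    (∀ x ∈ r₁, x ∈ r₃ → x = v) ∧
    (r₂.Chain' adjStar ∧ (∃ a, r₂.head? = some a ∧ adjStar a v) ∧
      (∃ b ∈ inBdry m, r₂.getLast? = some b) ∧ ∀ x ∈ r₂, x ∈ Sbox m ∧ ω x = false) ∧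
    (r₄.Chain' adjStar ∧ (∃ a, r₄.head? = some a ∧ adjStar a v) ∧
      (∃ b ∈ inBdry m, r₄.getLast? = some b) ∧ ∀ x ∈ r₄, x ∈ Sbox m ∧ ω x = false) ∧
    (∀ x ∈ r₂, x ∉ r₄) ∧
    SeparatesIn adjStar (Sbox m) {x : Site | x ∈ r₁ ∨ x ∈ r₃}
      {x : Site | x ∈ r₂} {x : Site | x ∈ r₄}}

/-! ### The torus and its Gibbs measures -/

/-- Vertices of the torus `𝕋_N` (the box `[−N,N]²` with periodic boundary). -/
abbrev TorusV (N : ℕ) : Type := ZMod (2 * N + 1) × ZMod (2 * N + 1)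

abbrev TorusConfig (N : ℕ) : Type := TorusV N → Bool

/-- spin value `±1` of a Boolean spin. -/
def spinVal (b : Bool) : ℝ := if b then 1 else -1

/-- `Σ_{{x,y}} σ(x)σ(y) + h Σ_x σ(x)`, the first sum over (unordered) adjacent pairs. -/
def torusEnergy (N : ℕ) (h : ℝ) (σ : TorusConfig N) : ℝ :=
  (∑ x : TorusV N,
      (spinVal (σ x) * spinVal (σ (x + (1, 0))) +
        spinVal (σ x) * spinVal (σ (x + (0, 1)))))
    + h * ∑ x : TorusV N, spinVal (σ x)

def gibbsWeight (N : ℕ) (K T h : ℝ) (σ : TorusConfig N) : ℝ :=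
  Real.exp ((K * T)⁻¹ * torusEnergy N h σ)

/-- The torus Gibbs measure `μ^N_{T,h}` (with Boltzmann constant `K`). -/
def torusGibbs (N : ℕ) (K T h : ℝ) : Measure (TorusConfig N) :=
  (ENNReal.ofReal (∑ σ : TorusConfig N, gibbsWeight N K T h σ))⁻¹ •
    ∑ σ : TorusConfig N, ENNReal.ofReal (gibbsWeight N K T h σ) • Measure.dirac σ

/-- `μ_t^N = μ^N_{T, h₀ + t(h−h₀)}`. -/
def gibbsPath (N : ℕ) (K T h₀ h : ℝ) (t : ℝ) : Measure (TorusConfig N) :=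
  torusGibbs N K T (h₀ + t * (h - h₀))

def torusEmb (N : ℕ) (x : Site) : TorusV N :=
  ((x.1 : ZMod (2 * N + 1)), (x.2 : ZMod (2 * N + 1)))

/-- The periodic lift of a torus configuration to `ℤ²`. -/
def liftConfig (N : ℕ) (σ : TorusConfig N) : Config := fun x => σ (torusEmb N x)

/-- `μ_t^N`, viewed (via the periodic lift) as a measure on configurations on `ℤ²`;
events on sub-boxes of `𝕋_N` are read through this measure. -/
def nuMeas (N : ℕ) (K T h₀ h : ℝ) (t : ℝ) : Measure Config :=
  (gibbsPath N K T h₀ h t).map (liftConfig N)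

def IncreasingEventT {N : ℕ} (A : Set (TorusConfig N)) : Prop :=
  ∀ σ σ' : TorusConfig N, (∀ v, σ v = true → σ' v = true) → σ ∈ A → σ' ∈ A

def FKGT {N : ℕ} (μ : Measure (TorusConfig N)) : Prop :=
  ∀ A B : Set (TorusConfig N), IncreasingEventT A → IncreasingEventT B →
    Pr μ A * Pr μ B ≤ Pr μ (A ∩ B)

def flipT {N : ℕ} (v : TorusV N) (σ : TorusConfig N) : TorusConfig N :=
  Function.update σ v (!σ v)

def pivotalT {N : ℕ} (v : TorusV N) (A : Set (TorusConfig N)) : Set (TorusConfig N) :=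
  {σ : TorusConfig N | Xor' (σ ∈ A) (flipT v σ ∈ A)}


namespace S9aux
open Real Finset

/-- indicator with real value 1 -/
def indC {N : ℕ} (X : Set (TorusConfig N)) : TorusConfig N → ℝ := X.indicator fun _ => 1

lemma indC_nonneg {N : ℕ} (X : Set (TorusConfig N)) (σ : TorusConfig N) : 0 ≤ indC X σ := by
  unfold indC; by_cases h : σ ∈ X <;> simp [h]

lemma indC_of_mem {N : ℕ} {X : Set (TorusConfig N)} {σ} (h : σ ∈ X) : indC X σ = 1 := by
  simp [indC, h]
lemma indC_of_not_mem {N : ℕ} {X : Set (TorusConfig N)} {σ} (h : σ ∉ X) : indC X σ = 0 := by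
  simp [indC, h]

def SX (N : ℕ) (K T hh : ℝ) (f : TorusConfig N → ℝ) : ℝ :=
  ∑ σ : TorusConfig N, f σ * gibbsWeight N K T hh σ

def Zs (N : ℕ) (K T hh : ℝ) : ℝ := ∑ σ : TorusConfig N, gibbsWeight N K T hh σ

lemma Zs_pos (N : ℕ) (K T hh : ℝ) : 0 < Zs N K T hh :=
  Finset.sum_pos (fun σ _ => Real.exp_pos _) Finset.univ_nonempty

lemma torusGibbs_apply (N : ℕ) (K T hh : ℝ) (A : Set (TorusConfig N)) :
    torusGibbs N K T hh A =
      (ENNReal.ofReal (Zs N K T hh))⁻¹ * ENNReal.ofReal (SX N K T hh (indC A)) := by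
  have hAm : MeasurableSet A := (Set.toFinite A).measurableSet
  rw [torusGibbs]
  rw [Measure.smul_apply, smul_eq_mul]
  congr 1
  rw [show ((∑ σ : TorusConfig N, ENNReal.ofReal (gibbsWeight N K T hh σ) • Measure.dirac σ) A)
      = ∑ σ : TorusConfig N, (ENNReal.ofReal (gibbsWeight N K T hh σ) • Measure.dirac σ) A by
    rw [Measure.coe_finset_sum]; simp]
  have hnn : ∀ σ ∈ Finset.univ, 0 ≤ indC A σ * gibbsWeight N K T hh σ := by
    intro σ _
    exact mul_nonneg (indC_nonneg A σ) (le_of_lt (Real.exp_pos _))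
  rw [SX, ENNReal.ofReal_sum_of_nonneg hnn]
  refine Finset.sum_congr rfl fun σ _ => ?_
  rw [Measure.smul_apply, smul_eq_mul, Measure.dirac_apply' _ hAm]
  by_cases h : σ ∈ A
  · simp [h, indC_of_mem h]
  · simp [h, indC_of_not_mem h]

lemma Pr_eq (N : ℕ) (K T hh : ℝ) (A : Set (TorusConfig N)) :
    Pr (torusGibbs N K T hh) A = SX N K T hh (indC A) / Zs N K T hh := by
  rw [Pr, torusGibbs_apply]
  rw [ENNReal.toReal_mul, ENNReal.toReal_inv, ENNReal.toReal_ofReal (Zs_pos N K T hh).le,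
    ENNReal.toReal_ofReal]
  · rw [div_eq_inv_mul]
  · exact Finset.sum_nonneg fun σ _ => mul_nonneg (indC_nonneg A σ) (Real.exp_pos _).le

instance isProb (N : ℕ) (K T hh : ℝ) : IsProbabilityMeasure (torusGibbs N K T hh) := by
  constructor
  rw [torusGibbs_apply]
  have h1 : SX N K T hh (indC Set.univ) = Zs N K T hh := by
    refine Finset.sum_congr rfl fun σ _ => ?_
    rw [indC_of_mem (Set.mem_univ σ), one_mul]
  rw [h1]
  exact ENNReal.inv_mul_cancel (by simp [Zs_pos N K T hh]) ENNReal.ofReal_ne_top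

lemma integral_eq (N : ℕ) (K T hh : ℝ) (f : TorusConfig N → ℝ) :
    ∫ σ, f σ ∂(torusGibbs N K T hh) = SX N K T hh f / Zs N K T hh := by
  rw [MeasureTheory.integral_fintype (Integrable.of_finite)]
  have hsing : ∀ σ₀ : TorusConfig N,
      ((torusGibbs N K T hh) {σ₀}).toReal = gibbsWeight N K T hh σ₀ / Zs N K T hh := by
    intro σ₀
    have := Pr_eq N K T hh {σ₀}
    rw [Pr] at this
    rw [this]
    congr 1
    rw [SX, Finset.sum_eq_single σ₀]
    · rw [indC_of_mem (Set.mem_singleton σ₀), one_mul]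
    · intro σ _ hne; rw [indC_of_not_mem (by simpa using hne), zero_mul]
    · intro h; exact absurd (Finset.mem_univ σ₀) h
  rw [SX, Finset.sum_div]
  refine Finset.sum_congr rfl fun σ _ => ?_
  rw [measureReal_def, hsing σ, smul_eq_mul]
  ring

end S9aux

namespace S9aux2
open Real Finset S9aux

def E0 (N : ℕ) (σ : TorusConfig N) : ℝ :=
  ∑ x : TorusV N,
    (spinVal (σ x) * spinVal (σ (x + (1, 0))) + spinVal (σ x) * spinVal (σ (x + (0, 1))))

def Mg (N : ℕ) (σ : TorusConfig N) : ℝ := ∑ x : TorusV N, spinVal (σ x)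

lemma energy_eq (N : ℕ) (hh : ℝ) (σ : TorusConfig N) :
    torusEnergy N hh σ = E0 N σ + hh * Mg N σ := rfl

lemma weight_hasDerivAt (N : ℕ) (K T h₀ h t : ℝ) (σ : TorusConfig N) :
    HasDerivAt (fun s => gibbsWeight N K T (h₀ + s * (h - h₀)) σ)
      ((K * T)⁻¹ * (h - h₀) * Mg N σ * gibbsWeight N K T (h₀ + t * (h - h₀)) σ) t := by
  have hfe : (fun s => gibbsWeight N K T (h₀ + s * (h - h₀)) σ) =
      fun s => Real.exp (((K * T)⁻¹ * (E0 N σ + h₀ * Mg N σ)) +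
        s * ((K * T)⁻¹ * (h - h₀) * Mg N σ)) := by
    funext s
    simp only [gibbsWeight, energy_eq]
    congr 1
    ring
  rw [hfe]
  have h1 : HasDerivAt
      (fun s : ℝ => ((K * T)⁻¹ * (E0 N σ + h₀ * Mg N σ)) +
        s * ((K * T)⁻¹ * (h - h₀) * Mg N σ))
      ((K * T)⁻¹ * (h - h₀) * Mg N σ) t := by
    simpa using (hasDerivAt_mul_const ((K * T)⁻¹ * (h - h₀) * Mg N σ)).const_add
      ((K * T)⁻¹ * (E0 N σ + h₀ * Mg N σ))
  have h2 := h1.exp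
  have hfe2 : gibbsWeight N K T (h₀ + t * (h - h₀)) σ =
      Real.exp (((K * T)⁻¹ * (E0 N σ + h₀ * Mg N σ)) +
        t * ((K * T)⁻¹ * (h - h₀) * Mg N σ)) := by
    simp only [gibbsWeight, energy_eq]; congr 1; ring
  rw [hfe2]
  simpa [mul_comm] using h2

lemma SX_hasDerivAt (N : ℕ) (K T h₀ h t : ℝ) (f : TorusConfig N → ℝ) :
    HasDerivAt (fun s => SX N K T (h₀ + s * (h - h₀)) f)
      (∑ σ : TorusConfig N,
        f σ * ((K * T)⁻¹ * (h - h₀) * Mg N σ * gibbsWeight N K T (h₀ + t * (h - h₀)) σ)) t := by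
  exact HasDerivAt.fun_sum fun σ _ => (weight_hasDerivAt N K T h₀ h t σ).const_mul (f σ)

lemma Zs_hasDerivAt (N : ℕ) (K T h₀ h t : ℝ) :
    HasDerivAt (fun s => Zs N K T (h₀ + s * (h - h₀)))
      (∑ σ : TorusConfig N,
        (K * T)⁻¹ * (h - h₀) * Mg N σ * gibbsWeight N K T (h₀ + t * (h - h₀)) σ) t := by
  exact HasDerivAt.fun_sum fun σ _ => weight_hasDerivAt N K T h₀ h t σ

lemma energy_translate (N : ℕ) (hh : ℝ) (σ : TorusConfig N) (v : TorusV N) :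
    torusEnergy N hh (fun x => σ (x + v)) = torusEnergy N hh σ := by
  unfold torusEnergy
  congr 1
  · refine Fintype.sum_bijective (fun x => x + v) (Equiv.addRight v).bijective _ _ fun x => ?_
    simp only
    rw [add_right_comm x (1, 0) v, add_right_comm x (0, 1) v]
  · congr 1
    exact Fintype.sum_bijective (fun x => x + v) (Equiv.addRight v).bijective _ _ fun x => rfl

lemma weight_translate (N : ℕ) (K T hh : ℝ) (σ : TorusConfig N) (v : TorusV N) :
    gibbsWeight N K T hh (fun x => σ (x + v)) = gibbsWeight N K T hh σ := by
  unfold gibbsWeight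
  rw [energy_translate]

lemma sum_spin_translate (N : ℕ) (K T hh : ℝ) (v : TorusV N) :
    ∑ σ : TorusConfig N, spinVal (σ v) * gibbsWeight N K T hh σ
      = ∑ σ : TorusConfig N, spinVal (σ ((0, 0) : TorusV N)) * gibbsWeight N K T hh σ := by
  have hbij : Function.Bijective
      (fun (σ : TorusConfig N) => (fun x => σ (x + v) : TorusConfig N)) := by
    constructor
    · intro a b hab
      funext x
      have := congrFun hab (x - v)
      simpa using this
    · intro σ
      exact ⟨fun x => σ (x - v), by funext x; simp⟩
  refine Fintype.sum_bijective _ hbij _ _ fun σ => ?_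
  simp only
  rw [weight_translate]
  have h0 : ((0, 0) : TorusV N) + v = v := by simp
  rw [h0]

end S9aux2

namespace S9aux3
open Real Finset S9aux

variable {N : ℕ}

def Bset (v : TorusV N) (A : Set (TorusConfig N)) : Set (TorusConfig N) :=
  {σ | Function.update σ v false ∈ A}

def Gset (v : TorusV N) : Set (TorusConfig N) := {σ | σ v = true}

lemma piv_true {A : Set (TorusConfig N)} (hA : IncreasingEventT A) {v : TorusV N}
    {σ : TorusConfig N} (hσ : σ ∈ A ∩ pivotalT v A) : σ v = true := by
  by_contra hfalse
  have hv : σ v = false := by simpa using hfalse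
  have hle : ∀ x, σ x = true → flipT v σ x = true := by
    intro x hx
    by_cases hxv : x = v
    · subst hxv; rw [hx] at hv; exact absurd hv (by simp)
    · simpa [flipT, Function.update_of_ne hxv] using hx
  have h2 : flipT v σ ∈ A := hA σ _ hle hσ.1
  rcases hσ.2 with ⟨_, hnb⟩ | ⟨_, hna⟩
  · exact hnb h2
  · exact hna hσ.1

lemma piv_not_B {A : Set (TorusConfig N)} (hA : IncreasingEventT A) {v : TorusV N}
    {σ : TorusConfig N} (hσ : σ ∈ A ∩ pivotalT v A) : σ ∉ Bset v A := by
  intro hB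
  have hv := piv_true hA hσ
  have heq : flipT v σ = Function.update σ v false := by
    simp [flipT, hv]
  have hflipA : flipT v σ ∈ A := by rw [heq]; exact hB
  rcases hσ.2 with ⟨_, hnb⟩ | ⟨_, hna⟩
  · exact hnb hflipA
  · exact hna hσ.1

lemma notpiv_B {A : Set (TorusConfig N)} {v : TorusV N} {σ : TorusConfig N}
    (hσA : σ ∈ A) (hnp : σ ∉ pivotalT v A) : σ ∈ Bset v A := by
  have hflip : flipT v σ ∈ A := by
    by_contra hnf
    exact hnp (Or.inl ⟨hσA, hnf⟩)
  by_cases hv : σ v = true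
  · have heq : Function.update σ v false = flipT v σ := by
      unfold flipT; rw [hv, Bool.not_true]
    show Function.update σ v false ∈ A
    rw [heq]; exact hflip
  · have hv' : σ v = false := by simpa using hv
    show Function.update σ v false ∈ A
    rw [← hv', Function.update_eq_self]; exact hσA

lemma B_sub_A {A : Set (TorusConfig N)} (hA : IncreasingEventT A) {v : TorusV N} :
    Bset v A ⊆ A := by
  intro σ hB
  refine hA _ σ (fun x hx => ?_) hB
  by_cases hxv : x = v
  · subst hxv; rw [Function.update_self] at hx; exact absurd hx (by simp)
  · rwa [Function.update_of_ne hxv] at hx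

lemma B_incr {A : Set (TorusConfig N)} (hA : IncreasingEventT A) (v : TorusV N) :
    IncreasingEventT (Bset v A) := by
  intro σ σ' hle hB
  refine hA _ _ (fun x hx => ?_) hB
  by_cases hxv : x = v
  · subst hxv; rw [Function.update_self] at hx; exact absurd hx (by simp)
  · rw [Function.update_of_ne hxv] at hx ⊢; exact hle x hx

lemma G_incr (v : TorusV N) : IncreasingEventT (Gset v) :=
  fun _σ _σ' hle hG => hle v hG

lemma pt1 {A : Set (TorusConfig N)} (hA : IncreasingEventT A) (v : TorusV N)
    (σ : TorusConfig N) :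
    indC A σ * spinVal (σ v)
      = indC (A ∩ pivotalT v A) σ + indC (Bset v A) σ * spinVal (σ v) := by
  by_cases hσA : σ ∈ A
  · by_cases hp : σ ∈ pivotalT v A
    · have hT : σ ∈ A ∩ pivotalT v A := ⟨hσA, hp⟩
      rw [indC_of_mem hσA, indC_of_mem hT, indC_of_not_mem (piv_not_B hA hT),
        piv_true hA hT]
      simp [spinVal]
    · have hB := notpiv_B hσA hp
      rw [indC_of_mem hσA,
        indC_of_not_mem (show σ ∉ A ∩ pivotalT v A from fun hc => hp hc.2),
        indC_of_mem hB]
      ring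
  · rw [indC_of_not_mem hσA,
      indC_of_not_mem (show σ ∉ A ∩ pivotalT v A from fun hc => hσA hc.1),
      indC_of_not_mem (fun hB => hσA (B_sub_A hA hB))]
    ring

lemma pt2 {A : Set (TorusConfig N)} (hA : IncreasingEventT A) (v : TorusV N)
    (σ : TorusConfig N) :
    indC A σ = indC (A ∩ pivotalT v A) σ + indC (Bset v A) σ := by
  by_cases hσA : σ ∈ A
  · by_cases hp : σ ∈ pivotalT v A
    · have hT : σ ∈ A ∩ pivotalT v A := ⟨hσA, hp⟩
      rw [indC_of_mem hσA, indC_of_mem hT, indC_of_not_mem (piv_not_B hA hT)]; ring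
    · have hB := notpiv_B hσA hp
      rw [indC_of_mem hσA,
        indC_of_not_mem (show σ ∉ A ∩ pivotalT v A from fun hc => hp hc.2),
        indC_of_mem hB]; ring
  · rw [indC_of_not_mem hσA,
      indC_of_not_mem (show σ ∉ A ∩ pivotalT v A from fun hc => hσA hc.1),
      indC_of_not_mem (fun hB => hσA (B_sub_A hA hB))]; ring

lemma pt3 (v : TorusV N) (σ : TorusConfig N) :
    spinVal (σ v) = 2 * indC (Gset v) σ - 1 := by
  by_cases hv : σ v = true
  · rw [hv, indC_of_mem (show σ ∈ Gset v from hv)]; simp [spinVal]; norm_num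
  · have hv' : σ v = false := by simpa using hv
    rw [hv', indC_of_not_mem (show σ ∉ Gset v from by simp [Gset, hv'])]
    simp [spinVal]

lemma indC_inter (X Y : Set (TorusConfig N)) (σ : TorusConfig N) :
    indC (X ∩ Y) σ = indC X σ * indC Y σ := by
  by_cases hx : σ ∈ X <;> by_cases hy : σ ∈ Y <;>
    simp [indC, hx, hy, Set.indicator_of_mem, Set.indicator_of_notMem, Set.mem_inter_iff]

/-- The numerator-level covariance lower bound. -/
lemma cov_lower (N : ℕ) (K T hh : ℝ) (A : Set (TorusConfig N)) (hA : IncreasingEventT A)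
    (hfkg : FKGT (torusGibbs N K T hh)) (v : TorusV N) :
    (Zs N K T hh - SX N K T hh (fun σ => spinVal (σ v)))
        * SX N K T hh (indC (A ∩ pivotalT v A))
      ≤ SX N K T hh (fun σ => indC A σ * spinVal (σ v)) * Zs N K T hh
        - SX N K T hh (indC A) * SX N K T hh (fun σ => spinVal (σ v)) := by
  set Z := Zs N K T hh with hZdef
  have hZ : 0 < Z := Zs_pos N K T hh
  set ST := SX N K T hh (indC (A ∩ pivotalT v A)) with hSTdef
  set SB := SX N K T hh (indC (Bset v A)) with hSBdef
  set SG := SX N K T hh (indC (Gset v)) with hSGdef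
  set SBG := SX N K T hh (indC (Bset v A ∩ Gset v)) with hSBGdef
  -- decomposition of the main sums
  have hSAv : SX N K T hh (fun σ => indC A σ * spinVal (σ v)) = ST + (2 * SBG - SB) := by
    rw [hSTdef, hSBdef, hSBGdef]
    unfold SX
    rw [Finset.mul_sum, ← Finset.sum_sub_distrib, ← Finset.sum_add_distrib]
    refine Finset.sum_congr rfl fun σ _ => ?_
    simp only [pt1 hA v σ]
    simp only [pt3 v σ, indC_inter (Bset v A) (Gset v) σ]
    ring
  have hSA : SX N K T hh (indC A) = ST + SB := by
    rw [hSTdef, hSBdef]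
    unfold SX
    rw [← Finset.sum_add_distrib]
    refine Finset.sum_congr rfl fun σ _ => ?_
    rw [pt2 hA v σ]; ring
  have hSv : SX N K T hh (fun σ => spinVal (σ v)) = 2 * SG - Z := by
    rw [hSGdef, hZdef]
    unfold SX Zs
    rw [Finset.mul_sum, ← Finset.sum_sub_distrib]
    refine Finset.sum_congr rfl fun σ _ => ?_
    simp only [pt3 v σ]
    ring
  -- FKG
  have hfkg' := hfkg (Bset v A) (Gset v) (B_incr hA v) (G_incr v)
  rw [Pr_eq, Pr_eq, Pr_eq] at hfkg'
  have hfkg2 : SB * SG ≤ SBG * Z := by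
    rw [div_mul_div_comm, div_le_div_iff₀ (by positivity) hZ] at hfkg'
    rw [← mul_assoc] at hfkg'
    exact le_of_mul_le_mul_right hfkg' hZ
  rw [hSAv, hSA, hSv]
  nlinarith [hfkg2]

end S9aux3

namespace S9aux4
open Real Finset S9aux S9aux2

lemma spin_bdd (b : Bool) : -1 ≤ spinVal b ∧ spinVal b ≤ 1 := by
  cases b <;> simp [spinVal]

lemma flip_weight_le (N : ℕ) (hN : 1 ≤ N) (K T hh : ℝ) (hK : 0 < K) (hT : 0 < T)
    (hhnn : 0 ≤ hh) (σ : TorusConfig N) (hσ0 : σ (0 : TorusV N) = false) :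
    gibbsWeight N K T hh (Function.update σ (0 : TorusV N) true)
      ≤ Real.exp ((8 + 2 * hh) / (K * T)) * gibbsWeight N K T hh σ := by
  haveI : Fact (1 < 2 * N + 1) := ⟨by omega⟩
  set e1 : TorusV N := ((1 : ZMod (2 * N + 1)), (0 : ZMod (2 * N + 1))) with he1def
  set e2 : TorusV N := ((0 : ZMod (2 * N + 1)), (1 : ZMod (2 * N + 1))) with he2def
  have hone : (1 : ZMod (2 * N + 1)) ≠ 0 := one_ne_zero
  have he1 : e1 ≠ 0 := fun hc => hone (congrArg Prod.fst hc)
  have he2 : e2 ≠ 0 := fun hc => hone (congrArg Prod.snd hc)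
  have he12 : e1 ≠ e2 := fun hc => hone (congrArg Prod.fst hc)
  set σ' := Function.update σ (0 : TorusV N) true with hσ'def
  have hupd0 : σ' (0 : TorusV N) = true := Function.update_self _ _ _
  have hupd : ∀ y : TorusV N, y ≠ 0 → σ' y = σ y := fun y hy =>
    Function.update_of_ne hy _ _
  -- magnetization change
  have hM : Mg N σ' = Mg N σ + 2 := by
    have h2 : ∑ x : TorusV N, (spinVal (σ' x) - spinVal (σ x)) = 2 := by
      rw [Finset.sum_eq_single (0 : TorusV N)]
      · rw [hupd0, hσ0]; norm_num [spinVal]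
      · intro x _ hx; rw [hupd x hx, sub_self]
      · intro hc; exact absurd (Finset.mem_univ _) hc
    rw [Finset.sum_sub_distrib] at h2
    unfold Mg
    linarith
  -- pair-energy change
  have hE0 : E0 N σ' ≤ E0 N σ + 8 := by
    set D : TorusV N → ℝ := fun x =>
      (spinVal (σ' x) * spinVal (σ' (x + e1)) + spinVal (σ' x) * spinVal (σ' (x + e2)))
        - (spinVal (σ x) * spinVal (σ (x + e1)) + spinVal (σ x) * spinVal (σ (x + e2)))
      with hDdef
    have hsum : E0 N σ' - E0 N σ = ∑ x : TorusV N, D x := by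
      unfold E0
      rw [← Finset.sum_sub_distrib]
    have hzero : ∀ x : TorusV N, x ∉ ({0, -e1, -e2} : Finset (TorusV N)) → D x = 0 := by
      intro x hx
      simp only [Finset.mem_insert, Finset.mem_singleton] at hx
      push_neg at hx
      obtain ⟨hx0, hx1, hx2⟩ := hx
      have hxe1 : x + e1 ≠ 0 := fun hc => hx1 (eq_neg_of_add_eq_zero_left hc)
      have hxe2 : x + e2 ≠ 0 := fun hc => hx2 (eq_neg_of_add_eq_zero_left hc)
      simp only [hDdef, hupd x hx0, hupd _ hxe1, hupd _ hxe2, sub_self]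
    have hS : ∑ x : TorusV N, D x = ∑ x ∈ ({0, -e1, -e2} : Finset (TorusV N)), D x := by
      exact (Finset.sum_subset (Finset.subset_univ _) (fun x _ hx => hzero x hx)).symm
    have hmem1 : (0 : TorusV N) ∉ ({-e1, -e2} : Finset (TorusV N)) := by
      simp only [Finset.mem_insert, Finset.mem_singleton]
      push_neg
      exact ⟨fun hc => he1 (neg_eq_zero.mp hc.symm), fun hc => he2 (neg_eq_zero.mp hc.symm)⟩
    have hmem2 : (-e1 : TorusV N) ∉ ({-e2} : Finset (TorusV N)) := by
      simp only [Finset.mem_singleton]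
      exact fun hc => he12 (neg_inj.mp hc)
    have hsplit : ∑ x ∈ ({0, -e1, -e2} : Finset (TorusV N)), D x = D 0 + D (-e1) + D (-e2) := by
      rw [Finset.sum_insert hmem1, Finset.sum_insert hmem2, Finset.sum_singleton]
      ring
    have hD0 : D 0 ≤ 4 := by
      have h01 : (0 : TorusV N) + e1 = e1 := zero_add _
      have h02 : (0 : TorusV N) + e2 = e2 := zero_add _
      simp only [hDdef, h01, h02, hupd0, hupd e1 he1, hupd e2 he2, hσ0]
      rcases spin_bdd (σ e1) with ⟨ha1, ha2⟩
      rcases spin_bdd (σ e2) with ⟨hb1, hb2⟩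
      simp only [show spinVal true = (1:ℝ) from rfl, show spinVal false = (-1:ℝ) from rfl]
      nlinarith
    have hD1 : D (-e1) ≤ 2 := by
      have h1 : (-e1 : TorusV N) + e1 = 0 := neg_add_cancel _
      have h2 : (-e1 : TorusV N) + e2 ≠ 0 := fun hc => he12 (neg_add_eq_zero.mp hc)
      have h3 : (-e1 : TorusV N) ≠ 0 := fun hc => he1 (neg_eq_zero.mp hc)
      simp only [hDdef, h1, hupd _ h3, hupd _ h2, hupd0, hσ0]
      rcases spin_bdd (σ (-e1)) with ⟨ha1, ha2⟩
      rcases spin_bdd (σ (-e1 + e2)) with ⟨hb1, hb2⟩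
      simp only [show spinVal true = (1:ℝ) from rfl, show spinVal false = (-1:ℝ) from rfl]
      nlinarith
    have hD2 : D (-e2) ≤ 2 := by
      have h1 : (-e2 : TorusV N) + e2 = 0 := neg_add_cancel _
      have h2 : (-e2 : TorusV N) + e1 ≠ 0 := fun hc => he12 (neg_add_eq_zero.mp hc).symm
      have h3 : (-e2 : TorusV N) ≠ 0 := fun hc => he2 (neg_eq_zero.mp hc)
      simp only [hDdef, h1, hupd _ h3, hupd _ h2, hupd0, hσ0]
      rcases spin_bdd (σ (-e2)) with ⟨ha1, ha2⟩
      rcases spin_bdd (σ (-e2 + e1)) with ⟨hb1, hb2⟩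
      simp only [show spinVal true = (1:ℝ) from rfl, show spinVal false = (-1:ℝ) from rfl]
      nlinarith
    linarith [hsum, hS, hsplit, hD0, hD1, hD2]
  -- combine
  have hKT : 0 < K * T := mul_pos hK hT
  unfold gibbsWeight
  rw [← Real.exp_add]
  apply Real.exp_le_exp.mpr
  have hE : torusEnergy N hh σ' ≤ torusEnergy N hh σ + (8 + 2 * hh) := by
    rw [energy_eq, energy_eq, hM]
    nlinarith [hE0, hhnn]
  have hc : 0 ≤ (K * T)⁻¹ := by positivity
  have := mul_le_mul_of_nonneg_left hE hc
  rw [div_eq_mul_inv]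
  nlinarith [this]

lemma spin_bound (N : ℕ) (hN : 1 ≤ N) (K T hh : ℝ) (hK : 0 < K) (hT : 0 < T)
    (hhnn : 0 ≤ hh) :
    2 * (1 + Real.exp ((8 + 2 * hh) / (K * T)))⁻¹
      ≤ 1 - SX N K T hh (fun σ => spinVal (σ ((0, 0) : TorusV N))) / Zs N K T hh := by
  have hZ : 0 < Zs N K T hh := Zs_pos N K T hh
  set d := Real.exp ((8 + 2 * hh) / (K * T)) with hddef
  have hd : 0 < d := Real.exp_pos _
  classical
  set Wm := ∑ σ ∈ Finset.univ.filter (fun σ : TorusConfig N => σ (0 : TorusV N) = false),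
    gibbsWeight N K T hh σ with hWmdef
  set Wp := ∑ σ ∈ Finset.univ.filter (fun σ : TorusConfig N => ¬ σ (0 : TorusV N) = false),
    gibbsWeight N K T hh σ with hWpdef
  have hWm0 : 0 ≤ Wm := Finset.sum_nonneg fun σ _ => (Real.exp_pos _).le
  have hZsplit : Wm + Wp = Zs N K T hh := by
    rw [hWmdef, hWpdef, Zs]
    exact Finset.sum_filter_add_sum_filter_not _ _ _
  -- Wp ≤ d * Wm via the flip bijection
  have hWp : Wp ≤ d * Wm := by
    have hbij : Wp = ∑ σ ∈ Finset.univ.filter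
        (fun σ : TorusConfig N => σ (0 : TorusV N) = false),
        gibbsWeight N K T hh (Function.update σ (0 : TorusV N) true) := by
      rw [hWpdef]
      refine Finset.sum_nbij' (fun σ => Function.update σ (0 : TorusV N) false)
        (fun σ => Function.update σ (0 : TorusV N) true) ?_ ?_ ?_ ?_ ?_
      · intro σ hσ
        simp only [Finset.mem_filter, Finset.mem_univ, true_and]
        exact Function.update_self _ _ _
      · intro σ hσ
        simp only [Finset.mem_filter, Finset.mem_univ, true_and]
        rw [Function.update_self]
        simp
      · intro σ hσ
        simp only [Finset.mem_filter, Finset.mem_univ, true_and] at hσ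
        show Function.update (Function.update σ (0 : TorusV N) false) (0 : TorusV N) true = σ
        rw [Function.update_idem]
        have : σ (0 : TorusV N) = true := by
          cases hc : σ (0 : TorusV N)
          · exact absurd hc hσ
          · rfl
        rw [← this, Function.update_eq_self]
      · intro σ hσ
        simp only [Finset.mem_filter, Finset.mem_univ, true_and] at hσ
        show Function.update (Function.update σ (0 : TorusV N) true) (0 : TorusV N) false = σ
        rw [Function.update_idem, ← hσ, Function.update_eq_self]
      · intro σ hσ
        simp only [Finset.mem_filter, Finset.mem_univ, true_and] at hσ
        have : σ (0 : TorusV N) = true := by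
          cases hc : σ (0 : TorusV N)
          · exact absurd hc hσ
          · rfl
        rw [show Function.update (Function.update σ (0 : TorusV N) false)
            (0 : TorusV N) true = σ by
          rw [Function.update_idem, ← this, Function.update_eq_self]]
    rw [hbij, Finset.mul_sum]
    refine Finset.sum_le_sum fun σ hσ => ?_
    simp only [Finset.mem_filter, Finset.mem_univ, true_and] at hσ
    exact flip_weight_le N hN K T hh hK hT hhnn σ hσ
  -- magnetization identity
  have hmag : Zs N K T hh - SX N K T hh (fun σ => spinVal (σ ((0, 0) : TorusV N)))
      = 2 * Wm := by
    rw [hWmdef, Zs, SX, ← Finset.sum_sub_distrib, Finset.mul_sum,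
      Finset.sum_filter]
    refine Finset.sum_congr rfl fun σ _ => ?_
    rw [Prod.mk_zero_zero]
    cases hc : σ (0 : TorusV N) <;> simp [hc, spinVal] <;> ring
  have h1d : 0 < 1 + d := by linarith
  rw [show (1 : ℝ) - SX N K T hh (fun σ => spinVal (σ ((0, 0) : TorusV N))) / Zs N K T hh
      = (Zs N K T hh - SX N K T hh (fun σ => spinVal (σ ((0, 0) : TorusV N)))) / Zs N K T hh
    by field_simp]
  rw [hmag, ← div_eq_mul_inv, div_le_div_iff₀ h1d hZ]
  nlinarith [hWp, hZsplit, hWm0, hd]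

end S9aux4

namespace S9aux2
open Real Finset S9aux

lemma sum_decomp (N : ℕ) (K T hh cc : ℝ) (f : TorusConfig N → ℝ) :
    ∑ σ : TorusConfig N, f σ * (cc * Mg N σ * gibbsWeight N K T hh σ)
      = cc * ∑ v : TorusV N, SX N K T hh (fun σ => f σ * spinVal (σ v)) := by
  have h1 : ∀ σ : TorusConfig N, f σ * (cc * Mg N σ * gibbsWeight N K T hh σ)
      = ∑ v : TorusV N, cc * (f σ * spinVal (σ v) * gibbsWeight N K T hh σ) := by
    intro σ
    rw [show Mg N σ = ∑ v : TorusV N, spinVal (σ v) from rfl]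
    rw [Finset.mul_sum, Finset.sum_mul, Finset.mul_sum]
    exact Finset.sum_congr rfl fun v _ => by ring
  rw [Finset.sum_congr rfl (fun σ _ => h1 σ), Finset.sum_comm, Finset.mul_sum]
  refine Finset.sum_congr rfl fun v _ => ?_
  rw [SX, Finset.mul_sum]

lemma sum_decomp0 (N : ℕ) (K T hh cc : ℝ) :
    ∑ σ : TorusConfig N, cc * Mg N σ * gibbsWeight N K T hh σ
      = cc * ∑ v : TorusV N, SX N K T hh (fun σ => spinVal (σ v)) := by
  have h1 : ∀ σ : TorusConfig N, cc * Mg N σ * gibbsWeight N K T hh σ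
      = ∑ v : TorusV N, cc * (spinVal (σ v) * gibbsWeight N K T hh σ) := by
    intro σ
    rw [show Mg N σ = ∑ v : TorusV N, spinVal (σ v) from rfl]
    rw [Finset.mul_sum, Finset.sum_mul]
    exact Finset.sum_congr rfl fun v _ => by ring
  rw [Finset.sum_congr rfl (fun σ _ => h1 σ), Finset.sum_comm, Finset.mul_sum]
  refine Finset.sum_congr rfl fun v _ => ?_
  simp only [SX, Finset.mul_sum]

lemma SX_spin_translate (N : ℕ) (K T hh : ℝ) (v : TorusV N) :
    SX N K T hh (fun σ => spinVal (σ v))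
      = SX N K T hh (fun σ => spinVal (σ ((0, 0) : TorusV N))) :=
  sum_spin_translate N K T hh v

end S9aux2

set_option maxHeartbeats 2000000 in
open S9aux S9aux2 S9aux3 S9aux4 in
/-- Russo lower bound for increasing events on the torus. -/
theorem statement_9 (N : ℕ) (hN : 1 ≤ N) (K T h₀ h : ℝ) (hK : 0 < K) (hT : 0 < T)
    (hh₀ : 0 ≤ h₀) (hh : h₀ < h)
    (hfkg : ∀ t ∈ Set.Icc (0 : ℝ) 1, FKGT (gibbsPath N K T h₀ h t))
    (A : Set (TorusConfig N)) (hA : IncreasingEventT A) :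
    ∀ t ∈ Set.Icc (0 : ℝ) 1,
      (((h - h₀) / (K * T)) *
          (1 - ∫ σ, spinVal (σ ((0, 0) : TorusV N)) ∂(gibbsPath N K T h₀ h t)) *
          ∑ v : TorusV N, Pr (gibbsPath N K T h₀ h t) (A ∩ pivotalT v A)
        ≤ deriv (fun s => Pr (gibbsPath N K T h₀ h s) A) t) ∧
      2 * (1 + Real.exp ((8 + 2 * (h₀ + t * (h - h₀))) / (K * T)))⁻¹ ≤
        1 - ∫ σ, spinVal (σ ((0, 0) : TorusV N)) ∂(gibbsPath N K T h₀ h t) := by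
  intro t htmem
  obtain ⟨ht0, ht1⟩ := htmem
  have hKT : 0 < K * T := mul_pos hK hT
  set hfld : ℝ := h₀ + t * (h - h₀) with hflddef
  have hfldnn : 0 ≤ hfld := by
    have : 0 ≤ t * (h - h₀) := mul_nonneg ht0 (by linarith)
    rw [hflddef]; linarith
  have hZ : 0 < Zs N K T hfld := Zs_pos N K T hfld
  have hint : ∫ σ, spinVal (σ ((0, 0) : TorusV N)) ∂(gibbsPath N K T h₀ h t)
      = SX N K T hfld (fun σ => spinVal (σ ((0, 0) : TorusV N))) / Zs N K T hfld := by
    exact integral_eq N K T hfld _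
  constructor
  · -- derivative lower bound
    set cε : ℝ := (K * T)⁻¹ * (h - h₀) with hcεdef
    have hcε : 0 ≤ cε := by
      have h1 : 0 ≤ h - h₀ := by linarith
      rw [hcεdef]
      positivity
    -- the function is a ratio of smooth functions
    have hfun : (fun s => Pr (gibbsPath N K T h₀ h s) A)
        = fun s => SX N K T (h₀ + s * (h - h₀)) (indC A) / Zs N K T (h₀ + s * (h - h₀)) := by
      funext s
      exact Pr_eq N K T (h₀ + s * (h - h₀)) A
    have hS := SX_hasDerivAt N K T h₀ h t (indC A)
    have hZd := Zs_hasDerivAt N K T h₀ h t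
    have hder : HasDerivAt (fun s => Pr (gibbsPath N K T h₀ h s) A)
        (((∑ σ : TorusConfig N,
              indC A σ * ((K * T)⁻¹ * (h - h₀) * Mg N σ * gibbsWeight N K T hfld σ))
            * Zs N K T hfld
          - SX N K T hfld (indC A) *
            (∑ σ : TorusConfig N,
              (K * T)⁻¹ * (h - h₀) * Mg N σ * gibbsWeight N K T hfld σ))
          / (Zs N K T hfld) ^ 2) t := by
      rw [hfun]
      exact hS.div hZd hZ.ne'
    -- decompose the derivative over vertices
    have hdec1 : (∑ σ : TorusConfig N,
        indC A σ * ((K * T)⁻¹ * (h - h₀) * Mg N σ * gibbsWeight N K T hfld σ))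
        = cε * ∑ v : TorusV N, SX N K T hfld (fun σ => indC A σ * spinVal (σ v)) := by
      rw [hcεdef]
      exact sum_decomp N K T hfld ((K * T)⁻¹ * (h - h₀)) (indC A)
    have hdec2 : (∑ σ : TorusConfig N,
        (K * T)⁻¹ * (h - h₀) * Mg N σ * gibbsWeight N K T hfld σ)
        = cε * ∑ v : TorusV N, SX N K T hfld (fun σ => spinVal (σ v)) := by
      rw [hcεdef]
      exact sum_decomp0 N K T hfld ((K * T)⁻¹ * (h - h₀))
    rw [hdec1, hdec2] at hder
    rw [hder.deriv, hint]
    -- abbreviations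
    set Z := Zs N K T hfld with hZdef
    set S0 := SX N K T hfld (fun σ => spinVal (σ ((0, 0) : TorusV N))) with hS0def
    set SA := SX N K T hfld (indC A) with hSAdef
    have hPrsum : (∑ v : TorusV N, Pr (gibbsPath N K T h₀ h t) (A ∩ pivotalT v A))
        = ∑ v : TorusV N, SX N K T hfld (indC (A ∩ pivotalT v A)) / Z :=
      Finset.sum_congr rfl fun v _ => Pr_eq N K T hfld _
    rw [hPrsum]
    have hfkgt : FKGT (torusGibbs N K T hfld) := hfkg t ⟨ht0, ht1⟩
    -- per-vertex covariance bound, summed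
    have hkey : ∑ v : TorusV N, (Z - S0) * SX N K T hfld (indC (A ∩ pivotalT v A))
        ≤ ∑ v : TorusV N,
            (SX N K T hfld (fun σ => indC A σ * spinVal (σ v)) * Z
              - SA * SX N K T hfld (fun σ => spinVal (σ v))) := by
      refine Finset.sum_le_sum fun v _ => ?_
      have e : SX N K T hfld (fun σ => spinVal (σ v)) = S0 :=
        (SX_spin_translate N K T hfld v).trans hS0def.symm
      rw [← e]
      exact cov_lower N K T hfld A hA hfkgt v
    have hdivtr : (h - h₀) / (K * T) = cε := by
      rw [hcεdef, div_eq_mul_inv, mul_comm]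
    rw [hdivtr]
    have hone : (1 : ℝ) - S0 / Z = (Z - S0) / Z := by
      field_simp
    calc cε * (1 - S0 / Z) * ∑ v : TorusV N, SX N K T hfld (indC (A ∩ pivotalT v A)) / Z
        = cε * ((∑ v : TorusV N, (Z - S0) * SX N K T hfld (indC (A ∩ pivotalT v A))) / Z ^ 2) := by
          rw [hone, ← Finset.sum_div, ← Finset.mul_sum]
          ring
      _ ≤ cε * ((∑ v : TorusV N,
            (SX N K T hfld (fun σ => indC A σ * spinVal (σ v)) * Z
              - SA * SX N K T hfld (fun σ => spinVal (σ v)))) / Z ^ 2) := by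
          have h2 : (∑ v : TorusV N, (Z - S0) * SX N K T hfld (indC (A ∩ pivotalT v A))) / Z ^ 2
              ≤ (∑ v : TorusV N,
                  (SX N K T hfld (fun σ => indC A σ * spinVal (σ v)) * Z
                    - SA * SX N K T hfld (fun σ => spinVal (σ v)))) / Z ^ 2 := by
            gcongr
          exact mul_le_mul_of_nonneg_left h2 hcε
      _ = (cε * (∑ v : TorusV N, SX N K T hfld (fun σ => indC A σ * spinVal (σ v))) * Z
            - SA * (cε * ∑ v : TorusV N, SX N K T hfld (fun σ => spinVal (σ v)))) / Z ^ 2 := by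
          rw [Finset.sum_sub_distrib, ← Finset.sum_mul, ← Finset.mul_sum]
          ring
  · -- spin expectation bound
    rw [hint]
    exact spin_bound N hN K T hfld hK hT hfldnn
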